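/- Let α > 0, γ_P > 0, γ_I > 0, let Ψ, Ψ_f : ℝ → ℝ^{3×3} be continuous, and let ĩ, θ̃ : ℝ → ℝ³ be differentiable and satisfy the unperturbed error dynamics ĩ'(t) = −α·ĩ(t) + Ψ(t)·θ̃(t) and θ̃'(t) = −γ_P·Ψ(t)ᵀ·ĩ(t) − γ_I·Ψ_f(t)ᵀ·Ψ_f(t)·θ̃(t). Then V(t) := (1/2)|ĩ(t)|² + (1/(2γ_P))|θ̃(t)|² is nonincreasing on [0, ∞); in particular, for all t ≥ 0, |ĩ(t)|² + (1/γ_P)|θ̃(t)|² ≤ |ĩ(0)|² + (1/γ_P)|θ̃(0)|², so all trajectories are globally bounded. -/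

import Mathlib

open Matrix

theorem composite_identifier_trajectories_bounded
    (α γP γI : ℝ) (hα : 0 < α) (hγP : 0 < γP) (hγI : 0 < γI)
    (Ψ Ψf : ℝ → Matrix (Fin 3) (Fin 3) ℝ)
    (hΨ : Continuous Ψ) (hΨf : Continuous Ψf)
    (itil θtil : ℝ → Fin 3 → ℝ)
    (hitil : ∀ t : ℝ, HasDerivAt itil (-α • itil t + Ψ t *ᵥ θtil t) t)
    (hθtil : ∀ t : ℝ, HasDerivAt θtil
      (-γP • ((Ψ t)ᵀ *ᵥ itil t) - γI • ((Ψf t)ᵀ *ᵥ (Ψf t *ᵥ θtil t))) t) :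
    AntitoneOn
      (fun τ => (1 / 2) * ∑ j : Fin 3, itil τ j ^ 2
        + (1 / (2 * γP)) * ∑ j : Fin 3, θtil τ j ^ 2) (Set.Ici (0 : ℝ)) ∧
    ∀ t : ℝ, 0 ≤ t →
      (∑ j : Fin 3, itil t j ^ 2) + (1 / γP) * ∑ j : Fin 3, θtil t j ^ 2
        ≤ (∑ j : Fin 3, itil 0 j ^ 2) + (1 / γP) * ∑ j : Fin 3, θtil 0 j ^ 2 := by
  have hVd : ∀ t : ℝ, HasDerivAt
      (fun τ => (1 / 2) * ∑ j : Fin 3, itil τ j ^ 2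
        + (1 / (2 * γP)) * ∑ j : Fin 3, θtil τ j ^ 2)
      ((1 / 2) * ∑ j : Fin 3, 2 * itil t j * ((-α • itil t + Ψ t *ᵥ θtil t) j)
        + (1 / (2 * γP)) * ∑ j : Fin 3, 2 * θtil t j *
          ((-γP • ((Ψ t)ᵀ *ᵥ itil t) - γI • ((Ψf t)ᵀ *ᵥ (Ψf t *ᵥ θtil t))) j)) t := by
    intro t
    have h1 := hasDerivAt_pi.mp (hitil t)
    have h2 := hasDerivAt_pi.mp (hθtil t)
    have hs1 : HasDerivAt (fun τ => ∑ j : Fin 3, itil τ j ^ 2)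
        (∑ j : Fin 3, 2 * itil t j * ((-α • itil t + Ψ t *ᵥ θtil t) j)) t := by
      refine HasDerivAt.fun_sum fun j _ => ?_
      have := (h1 j).fun_pow 2
      simpa [mul_comm, mul_assoc, mul_left_comm] using this
    have hs2 : HasDerivAt (fun τ => ∑ j : Fin 3, θtil τ j ^ 2)
        (∑ j : Fin 3, 2 * θtil t j *
          ((-γP • ((Ψ t)ᵀ *ᵥ itil t) - γI • ((Ψf t)ᵀ *ᵥ (Ψf t *ᵥ θtil t))) j)) t := by
      refine HasDerivAt.fun_sum fun j _ => ?_
      have := (h2 j).fun_pow 2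
      simpa [mul_comm, mul_assoc, mul_left_comm] using this
    exact (hs1.const_mul _).add (hs2.const_mul _)
  have key : ∀ t : ℝ,
      (1 / 2) * ∑ j : Fin 3, 2 * itil t j * ((-α • itil t + Ψ t *ᵥ θtil t) j)
        + (1 / (2 * γP)) * ∑ j : Fin 3, 2 * θtil t j *
          ((-γP • ((Ψ t)ᵀ *ᵥ itil t) - γI • ((Ψf t)ᵀ *ᵥ (Ψf t *ᵥ θtil t))) j) ≤ 0 := by
    intro t
    set w := Ψ t *ᵥ θtil t with hw
    set u := (Ψ t)ᵀ *ᵥ itil t with hu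
    set q := (Ψf t)ᵀ *ᵥ (Ψf t *ᵥ θtil t) with hq
    have e1 : ∑ j : Fin 3, 2 * itil t j * ((-α • itil t + w) j)
        = -(2 * α) * (∑ j : Fin 3, itil t j ^ 2) + 2 * ∑ j : Fin 3, itil t j * w j := by
      rw [Finset.mul_sum, Finset.mul_sum, ← Finset.sum_add_distrib]
      refine Finset.sum_congr rfl fun j _ => ?_
      simp only [Pi.add_apply, Pi.smul_apply, Pi.neg_apply, smul_eq_mul]
      ring
    have e2 : ∑ j : Fin 3, 2 * θtil t j * ((-γP • u - γI • q) j)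
        = -(2 * γP) * (∑ j : Fin 3, θtil t j * u j)
          - 2 * γI * ∑ j : Fin 3, θtil t j * q j := by
      rw [Finset.mul_sum, Finset.mul_sum, ← Finset.sum_sub_distrib]
      refine Finset.sum_congr rfl fun j _ => ?_
      simp only [Pi.sub_apply, Pi.smul_apply, Pi.neg_apply, smul_eq_mul]
      ring
    have hswap : ∑ j : Fin 3, itil t j * w j = ∑ j : Fin 3, θtil t j * u j := by
      simp only [hw, hu, Matrix.mulVec, dotProduct, Matrix.transpose_apply,
        Finset.mul_sum]
      rw [Finset.sum_comm]
      exact Finset.sum_congr rfl fun j _ => Finset.sum_congr rfl fun k _ => by ring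
    have hquad : ∑ j : Fin 3, θtil t j * q j
        = ∑ k : Fin 3, ((Ψf t *ᵥ θtil t) k) ^ 2 := by
      simp only [hq, Matrix.mulVec, dotProduct, Matrix.transpose_apply,
        Finset.mul_sum]
      rw [Finset.sum_comm]
      refine Finset.sum_congr rfl fun k _ => ?_
      rw [pow_two, Finset.sum_mul]
      refine Finset.sum_congr rfl fun j _ => ?_
      rw [Finset.mul_sum]
      exact Finset.sum_congr rfl fun l _ => by ring
    rw [e1, e2, hswap, hquad]
    have hS1 : (0:ℝ) ≤ ∑ j : Fin 3, itil t j ^ 2 :=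
      Finset.sum_nonneg fun j _ => sq_nonneg _
    have hS2 : (0:ℝ) ≤ ∑ k : Fin 3, ((Ψf t *ᵥ θtil t) k) ^ 2 :=
      Finset.sum_nonneg fun k _ => sq_nonneg _
    generalize hA : (∑ j : Fin 3, itil t j ^ 2) = S1 at hS1 ⊢
    generalize hB : (∑ k : Fin 3, ((Ψf t *ᵥ θtil t) k) ^ 2) = Q at hS2 ⊢
    generalize hC : (∑ j : Fin 3, θtil t j * u j) = T
    have hne : γP ≠ 0 := ne_of_gt hγP
    have heq : (1 / 2) * (-(2 * α) * S1 + 2 * T)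
        + (1 / (2 * γP)) * (-(2 * γP) * T - 2 * γI * Q)
        = -α * S1 - (γI / γP) * Q := by field_simp; ring
    rw [heq]
    have : 0 ≤ α * S1 + (γI / γP) * Q :=
      add_nonneg (mul_nonneg hα.le hS1) (mul_nonneg (div_nonneg hγI.le hγP.le) hS2)
    linarith
  have hanti : AntitoneOn
      (fun τ => (1 / 2) * ∑ j : Fin 3, itil τ j ^ 2
        + (1 / (2 * γP)) * ∑ j : Fin 3, θtil τ j ^ 2) (Set.Ici (0 : ℝ)) := by
    apply antitoneOn_of_deriv_nonpos (convex_Ici 0)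
    · exact fun x _ => (hVd x).continuousAt.continuousWithinAt
    · intro x _
      exact (hVd x).differentiableAt.differentiableWithinAt
    · intro x _
      rw [(hVd x).deriv]
      exact key x
  refine ⟨hanti, fun t ht => ?_⟩
  have hVle := hanti Set.self_mem_Ici (Set.mem_Ici.mpr ht) ht
  simp only at hVle
  have hne : γP ≠ 0 := ne_of_gt hγP
  calc (∑ j : Fin 3, itil t j ^ 2) + (1 / γP) * ∑ j : Fin 3, θtil t j ^ 2
      = 2 * ((1 / 2) * ∑ j : Fin 3, itil t j ^ 2
          + (1 / (2 * γP)) * ∑ j : Fin 3, θtil t j ^ 2) := by field_simp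
    _ ≤ 2 * ((1 / 2) * ∑ j : Fin 3, itil 0 j ^ 2
          + (1 / (2 * γP)) * ∑ j : Fin 3, θtil 0 j ^ 2) := by linarith
    _ = (∑ j : Fin 3, itil 0 j ^ 2) + (1 / γP) * ∑ j : Fin 3, θtil 0 j ^ 2 := by
          field_simp
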